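/- Let K(x) = (1/(2πi)) ∑_{j=1}^m (α_j/(x−a_j) − conj(α_j)/(x−conj(a_j))) with distinct poles a_j in the open upper half-plane and residues α_j solving the Vandermonde conditions ∑α_j = 1 and ∑α_j a_j^{ℓ} = 0 for 1 ≤ ℓ ≤ m−1. Then K is real-valued and there is a constant C such that |K(x)| ≤ C·(1+|x|)^{−(m+1)} for all real x. -/

import Mathlib

open Real

section aux

open Finset in
lemma term_id (m : ℕ) (x b β : ℂ) (h : x - b ≠ 0) :
    x ^ m * (β / (x - b)) =
      β * ∑ i ∈ Finset.range m, x ^ i * b ^ (m - 1 - i) + β * b ^ m / (x - b) := by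
  have hg := geom_sum₂_mul x b m
  field_simp
  linear_combination -β * hg

lemma cancel_sum (m : ℕ) (a α : Fin m → ℂ)
    (hnorm : ∑ k : Fin m, α k = 1)
    (hmom : ∀ ℓ : ℕ, 1 ≤ ℓ → ℓ ≤ m - 1 → ∑ k : Fin m, α k * a k ^ ℓ = 0)
    (j : ℕ) (hj : j < m) :
    ∑ k : Fin m, (α k * a k ^ j
      - (starRingEnd ℂ) (α k) * ((starRingEnd ℂ) (a k)) ^ j) = 0 := by
  have hconj : ∑ k : Fin m, (starRingEnd ℂ) (α k) * ((starRingEnd ℂ) (a k)) ^ j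
      = (starRingEnd ℂ) (∑ k : Fin m, α k * a k ^ j) := by
    rw [map_sum]
    exact Finset.sum_congr rfl (fun k _ => by rw [map_mul, map_pow])
  rw [Finset.sum_sub_distrib, hconj]
  rcases Nat.eq_zero_or_pos j with h0 | h1
  · subst h0; simp [hnorm]
  · rw [hmom j h1 (by omega)]; simp

lemma key_id (m : ℕ) (a α : Fin m → ℂ)
    (hnorm : ∑ k : Fin m, α k = 1)
    (hmom : ∀ ℓ : ℕ, 1 ≤ ℓ → ℓ ≤ m - 1 → ∑ k : Fin m, α k * a k ^ ℓ = 0)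
    (x : ℂ) (h1 : ∀ k, x - a k ≠ 0) (h2 : ∀ k, x - (starRingEnd ℂ) (a k) ≠ 0) :
    x ^ m * ∑ k : Fin m, (α k / (x - a k)
        - (starRingEnd ℂ) (α k) / (x - (starRingEnd ℂ) (a k))) =
    ∑ k : Fin m, (α k * a k ^ m / (x - a k)
        - (starRingEnd ℂ) (α k) * ((starRingEnd ℂ) (a k)) ^ m / (x - (starRingEnd ℂ) (a k))) := by
  rw [Finset.mul_sum]
  have step : ∀ k ∈ Finset.univ, x ^ m * (α k / (x - a k)
        - (starRingEnd ℂ) (α k) / (x - (starRingEnd ℂ) (a k))) =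
      (∑ i ∈ Finset.range m, x ^ i * (α k * a k ^ (m - 1 - i)
        - (starRingEnd ℂ) (α k) * ((starRingEnd ℂ) (a k)) ^ (m - 1 - i)))
      + (α k * a k ^ m / (x - a k)
        - (starRingEnd ℂ) (α k) * ((starRingEnd ℂ) (a k)) ^ m / (x - (starRingEnd ℂ) (a k))) := by
    intro k _
    rw [mul_sub, term_id m x (a k) (α k) (h1 k), term_id m x _ _ (h2 k)]
    have hs : ∑ i ∈ Finset.range m, x ^ i * (α k * a k ^ (m - 1 - i)
        - (starRingEnd ℂ) (α k) * ((starRingEnd ℂ) (a k)) ^ (m - 1 - i))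
        = α k * ∑ i ∈ Finset.range m, x ^ i * a k ^ (m - 1 - i)
          - (starRingEnd ℂ) (α k) * ∑ i ∈ Finset.range m, x ^ i * ((starRingEnd ℂ) (a k)) ^ (m - 1 - i) := by
      rw [Finset.mul_sum, Finset.mul_sum, ← Finset.sum_sub_distrib]
      exact Finset.sum_congr rfl (fun i _ => by ring)
    rw [hs]; ring
  rw [Finset.sum_congr rfl step, Finset.sum_add_distrib]
  have hz : ∑ k : Fin m, ∑ i ∈ Finset.range m, x ^ i * (α k * a k ^ (m - 1 - i)
      - (starRingEnd ℂ) (α k) * ((starRingEnd ℂ) (a k)) ^ (m - 1 - i)) = 0 := by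
    rw [Finset.sum_comm]
    apply Finset.sum_eq_zero
    intro i hi
    rw [← Finset.mul_sum, cancel_sum m a α hnorm hmom (m - 1 - i)
      (by have := Finset.mem_range.mp hi; omega), mul_zero]
  rw [hz, zero_add]

end aux

set_option maxHeartbeats 1000000 in
theorem rational_kernel_real_valued_and_decay (m : ℕ) (hm : 0 < m)
    (a α : Fin m → ℂ) (ha : Function.Injective a) (haim : ∀ k, 0 < (a k).im)
    (hnorm : ∑ k : Fin m, α k = 1)
    (hmom : ∀ ℓ : ℕ, 1 ≤ ℓ → ℓ ≤ m - 1 → ∑ k : Fin m, α k * a k ^ ℓ = 0)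
    (K : ℝ → ℂ)
    (hK : ∀ x : ℝ, K x = (1 / (2 * (π : ℂ) * Complex.I)) *
        ∑ k : Fin m, (α k / ((x : ℂ) - a k) -
          (starRingEnd ℂ) (α k) / ((x : ℂ) - (starRingEnd ℂ) (a k)))) :
    (∀ x : ℝ, (K x).im = 0) ∧
    ∃ C : ℝ, ∀ x : ℝ, ‖K x‖ ≤ C / (1 + |x|) ^ (m + 1) := by
  -- basic denominator facts
  have h1 : ∀ (x : ℝ) (k : Fin m), (x : ℂ) - a k ≠ 0 := by
    intro x k h
    have := congrArg Complex.im h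
    simp [Complex.sub_im] at this
    exact absurd this (haim k).ne'
  have h2 : ∀ (x : ℝ) (k : Fin m), (x : ℂ) - (starRingEnd ℂ) (a k) ≠ 0 := by
    intro x k h
    have := congrArg Complex.im h
    simp [Complex.sub_im, Complex.conj_im] at this
    exact absurd this (haim k).ne'
  have habs1 : ∀ (x : ℝ) (k : Fin m), (a k).im ≤ ‖(x : ℂ) - a k‖ := by
    intro x k
    have := Complex.abs_im_le_norm ((x : ℂ) - a k)
    rw [Complex.sub_im, Complex.ofReal_im, zero_sub, abs_neg,
      abs_of_pos (haim k)] at this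
    exact this
  have habs2 : ∀ (x : ℝ) (k : Fin m),
      (a k).im ≤ ‖(x : ℂ) - (starRingEnd ℂ) (a k)‖ := by
    intro x k
    have := Complex.abs_im_le_norm ((x : ℂ) - (starRingEnd ℂ) (a k))
    rw [Complex.sub_im, Complex.ofReal_im, Complex.conj_im, zero_sub, neg_neg,
      abs_of_pos (haim k)] at this
    exact this
  constructor
  · -- real-valued
    intro x
    rw [← Complex.conj_eq_iff_im, hK x]
    rw [map_mul, map_sum]
    have hc : (starRingEnd ℂ) (1 / (2 * (π : ℂ) * Complex.I))
        = -(1 / (2 * (π : ℂ) * Complex.I)) := by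
      rw [map_div₀, map_one, map_mul, map_mul, Complex.conj_I, Complex.conj_ofReal]
      rw [show (starRingEnd ℂ) 2 = 2 from map_ofNat _ 2]
      rw [show 2 * (π : ℂ) * -Complex.I = -(2 * (π : ℂ) * Complex.I) by ring, div_neg]
    have hsum : ∑ k : Fin m, (starRingEnd ℂ) (α k / ((x : ℂ) - a k) -
        (starRingEnd ℂ) (α k) / ((x : ℂ) - (starRingEnd ℂ) (a k)))
        = -∑ k : Fin m, (α k / ((x : ℂ) - a k) -
          (starRingEnd ℂ) (α k) / ((x : ℂ) - (starRingEnd ℂ) (a k))) := by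
      rw [← Finset.sum_neg_distrib]
      refine Finset.sum_congr rfl (fun k _ => ?_)
      rw [map_sub, map_div₀, map_div₀, map_sub, map_sub, Complex.conj_ofReal,
        Complex.conj_conj, Complex.conj_conj]
      ring
    rw [hc, hsum]
    ring
  · -- decay
    have hne : (Finset.univ : Finset (Fin m)).Nonempty := ⟨⟨0, hm⟩, Finset.mem_univ _⟩
    set δ : ℝ := Finset.univ.inf' hne (fun k => (a k).im) with hδdef
    have hδpos : 0 < δ := (Finset.lt_inf'_iff hne).mpr (fun k _ => haim k)
    have hδle : ∀ k, δ ≤ (a k).im := fun k => Finset.inf'_le _ (Finset.mem_univ k)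
    set C2 : ℝ := ∑ k : Fin m, 2 * ‖α k‖ / δ with hC2def
    have hC2 : 0 ≤ C2 := Finset.sum_nonneg (fun k _ => by positivity)
    set M : ℝ := Finset.univ.sup' hne (fun k => ‖a k‖) with hMdef
    have hM : ∀ k, ‖a k‖ ≤ M := fun k => Finset.le_sup' (fun k => ‖a k‖) (Finset.mem_univ k)
    have hM0 : 0 ≤ M := le_trans (norm_nonneg _) (hM ⟨0, hm⟩)
    set R : ℝ := 1 + 2 * M with hRdef
    have hR1 : 1 ≤ R := by simp [hRdef]; linarith
    set A : ℝ := ∑ k : Fin m, ‖α k‖ * ‖a k‖ ^ m with hAdef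
    have hA0 : 0 ≤ A := Finset.sum_nonneg (fun k _ => by positivity)
    set S : ℝ → ℂ := fun x => ∑ k : Fin m, (α k / ((x : ℂ) - a k) -
      (starRingEnd ℂ) (α k) / ((x : ℂ) - (starRingEnd ℂ) (a k))) with hSdef
    have hKS : ∀ x : ℝ, ‖K x‖ = 1 / (2 * π) * ‖S x‖ := by
      intro x
      rw [hK x, norm_mul, norm_div, norm_one, norm_mul, norm_mul, Complex.norm_I,
        Complex.norm_real, Real.norm_eq_abs, abs_of_pos Real.pi_pos, Complex.norm_two, mul_one]
    -- global bound
    have hSb : ∀ x : ℝ, ‖S x‖ ≤ C2 := by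
      intro x
      refine le_trans (norm_sum_le _ _) (Finset.sum_le_sum fun k _ => ?_)
      calc ‖α k / ((x : ℂ) - a k) -
            (starRingEnd ℂ) (α k) / ((x : ℂ) - (starRingEnd ℂ) (a k))‖
          ≤ ‖α k / ((x : ℂ) - a k)‖ +
            ‖(starRingEnd ℂ) (α k) / ((x : ℂ) - (starRingEnd ℂ) (a k))‖ :=
            norm_sub_le _ _
        _ = ‖α k‖ / ‖(x : ℂ) - a k‖ +
            ‖α k‖ / ‖(x : ℂ) - (starRingEnd ℂ) (a k)‖ := by
            rw [norm_div, norm_div, Complex.norm_conj]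
        _ ≤ ‖α k‖ / δ + ‖α k‖ / δ := by
            gcongr
            · exact le_trans (hδle k) (habs1 x k)
            · exact le_trans (hδle k) (habs2 x k)
        _ = 2 * ‖α k‖ / δ := by ring
    -- large x bound
    have hbig : ∀ x : ℝ, R ≤ |x| →
        ‖S x‖ ≤ 2 ^ (m + 3) * A / (1 + |x|) ^ (m + 1) := by
      intro x hx
      have hx1 : 1 ≤ |x| := le_trans hR1 hx
      have hxpos : 0 < |x| := lt_of_lt_of_le one_pos hx1
      have hMx : M ≤ |x| / 2 := by
        have : R - 1 ≤ |x| - 1 := by linarith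
        simp only [hRdef] at this
        linarith
      have hden1 : ∀ k, |x| / 2 ≤ ‖(x : ℂ) - a k‖ := by
        intro k
        have hn : ‖(x : ℂ)‖ - ‖a k‖ ≤ ‖(x : ℂ) - a k‖ := norm_sub_norm_le _ _
        rw [Complex.norm_real, Real.norm_eq_abs] at hn
        have := hM k
        linarith
      have hden2 : ∀ k, |x| / 2 ≤ ‖(x : ℂ) - (starRingEnd ℂ) (a k)‖ := by
        intro k
        have hn : ‖(x : ℂ)‖ - ‖(starRingEnd ℂ) (a k)‖ ≤
            ‖(x : ℂ) - (starRingEnd ℂ) (a k)‖ := norm_sub_norm_le _ _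
        rw [Complex.norm_real, Real.norm_eq_abs, Complex.norm_conj] at hn
        have := hM k
        linarith
      have hTb : ‖∑ k : Fin m, (α k * a k ^ m / ((x : ℂ) - a k)
          - (starRingEnd ℂ) (α k) * ((starRingEnd ℂ) (a k)) ^ m /
            ((x : ℂ) - (starRingEnd ℂ) (a k)))‖ ≤ 4 * A / |x| := by
        refine le_trans (norm_sum_le _ _) ?_
        have : ∀ k ∈ (Finset.univ : Finset (Fin m)),
            ‖α k * a k ^ m / ((x : ℂ) - a k)
              - (starRingEnd ℂ) (α k) * ((starRingEnd ℂ) (a k)) ^ m /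
                ((x : ℂ) - (starRingEnd ℂ) (a k))‖
            ≤ 4 * (‖α k‖ * ‖a k‖ ^ m) / |x| := by
          intro k _
          calc ‖α k * a k ^ m / ((x : ℂ) - a k)
              - (starRingEnd ℂ) (α k) * ((starRingEnd ℂ) (a k)) ^ m /
                ((x : ℂ) - (starRingEnd ℂ) (a k))‖
              ≤ ‖α k * a k ^ m / ((x : ℂ) - a k)‖ +
                ‖(starRingEnd ℂ) (α k) * ((starRingEnd ℂ) (a k)) ^ m /
                  ((x : ℂ) - (starRingEnd ℂ) (a k))‖ := norm_sub_le _ _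
            _ = ‖α k‖ * ‖a k‖ ^ m / ‖(x : ℂ) - a k‖
                + ‖α k‖ * ‖a k‖ ^ m /
                  ‖(x : ℂ) - (starRingEnd ℂ) (a k)‖ := by
                rw [norm_div, norm_div, norm_mul, norm_mul, norm_pow, norm_pow,
                  Complex.norm_conj, Complex.norm_conj]
            _ ≤ ‖α k‖ * ‖a k‖ ^ m / (|x| / 2)
                + ‖α k‖ * ‖a k‖ ^ m / (|x| / 2) := by
                gcongr
                · exact hden1 k
                · exact hden2 k
            _ = 4 * (‖α k‖ * ‖a k‖ ^ m) / |x| := by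
                field_simp; ring
        refine le_trans (Finset.sum_le_sum this) ?_
        rw [← Finset.sum_div, ← Finset.mul_sum]
      have hkey : ‖(x : ℂ)‖ ^ m * ‖S x‖ =
          ‖∑ k : Fin m, (α k * a k ^ m / ((x : ℂ) - a k)
            - (starRingEnd ℂ) (α k) * ((starRingEnd ℂ) (a k)) ^ m /
              ((x : ℂ) - (starRingEnd ℂ) (a k)))‖ := by
        rw [← norm_pow, ← norm_mul,
          key_id m a α hnorm hmom (x : ℂ) (h1 x) (h2 x)]
      rw [Complex.norm_real, Real.norm_eq_abs] at hkey
      have hS4 : ‖S x‖ ≤ 4 * A / |x| ^ (m + 1) := by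
        rw [le_div_iff₀ (by positivity : (0:ℝ) < |x| ^ (m + 1))]
        calc ‖S x‖ * |x| ^ (m + 1)
            = (|x| ^ m * ‖S x‖) * |x| := by ring
          _ = ‖∑ k : Fin m, (α k * a k ^ m / ((x : ℂ) - a k)
              - (starRingEnd ℂ) (α k) * ((starRingEnd ℂ) (a k)) ^ m /
                ((x : ℂ) - (starRingEnd ℂ) (a k)))‖ * |x| := by rw [hkey]
          _ ≤ (4 * A / |x|) * |x| := mul_le_mul_of_nonneg_right hTb (abs_nonneg x)
          _ = 4 * A := by field_simp
      have h2x : (1 + |x|) ^ (m + 1) ≤ 2 ^ (m + 1) * |x| ^ (m + 1) := by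
        rw [← mul_pow]
        exact pow_le_pow_left₀ (by positivity) (by linarith) _
      refine le_trans hS4 ?_
      rw [div_le_div_iff₀ (by positivity) (by positivity)]
      calc 4 * A * (1 + |x|) ^ (m + 1)
          ≤ 4 * A * (2 ^ (m + 1) * |x| ^ (m + 1)) := by
            exact mul_le_mul_of_nonneg_left h2x (by linarith)
        _ = 2 ^ (m + 3) * A * |x| ^ (m + 1) := by ring
    -- conclude
    refine ⟨1 / (2 * π) * max (2 ^ (m + 3) * A) (C2 * (1 + R) ^ (m + 1)), fun x => ?_⟩
    have hmax : ‖S x‖ ≤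
        max (2 ^ (m + 3) * A) (C2 * (1 + R) ^ (m + 1)) / (1 + |x|) ^ (m + 1) := by
      rcases le_or_gt R |x| with hx | hx
      · refine le_trans (hbig x hx) ?_
        have hpow : (0:ℝ) < (1 + |x|) ^ (m + 1) := by positivity
        exact div_le_div_of_nonneg_right (le_max_left _ _) hpow.le
      · have h1x : (0:ℝ) < (1 + |x|) ^ (m + 1) := by positivity
        rw [le_div_iff₀ h1x]
        calc ‖S x‖ * (1 + |x|) ^ (m + 1)
            ≤ C2 * (1 + R) ^ (m + 1) :=
              mul_le_mul (hSb x)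
                (pow_le_pow_left₀ (by positivity) (by linarith [abs_nonneg x]) _)
                (by positivity) hC2
          _ ≤ max (2 ^ (m + 3) * A) (C2 * (1 + R) ^ (m + 1)) := le_max_right _ _
    rw [hKS x]
    calc 1 / (2 * π) * ‖S x‖
        ≤ 1 / (2 * π) * (max (2 ^ (m + 3) * A) (C2 * (1 + R) ^ (m + 1)) /
          (1 + |x|) ^ (m + 1)) :=
          mul_le_mul_of_nonneg_left hmax (by positivity)
      _ = 1 / (2 * π) * max (2 ^ (m + 3) * A) (C2 * (1 + R) ^ (m + 1)) /
          (1 + |x|) ^ (m + 1) := by ring
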